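/- Let k ≥ 1 be an integer and let a, b ∈ ℤ/kℤ. Then there exists s ∈ ℤ/kℤ such that the ideal of ℤ/kℤ generated by a + s·b equals the ideal generated by a and b. -/
import Mathlib

-- coprime in AP
lemma aux_coprime_exists (a b k : ℕ) (hk : k ≠ 0) (hab : Nat.Coprime a b) :
    ∃ s : ℕ, Nat.Coprime (a + s * b) k := by
  let ps := k.primeFactors.filter (fun p ↦ ¬ p ∣ a)
  refine ⟨ps.prod id, Nat.coprime_of_dvd fun p pp hp hpk ↦ ?_⟩
  by_cases hpa : p ∣ a
  · have hsb : p ∣ ps.prod id * b := (Nat.dvd_add_right hpa).mp hp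
    rcases pp.dvd_mul.mp hsb with h | h
    · have ⟨q, hq, hq'⟩ := (pp.prime.dvd_finset_prod_iff id).mp h
      rw [Finset.mem_filter] at hq
      exact hq.2 (((Nat.prime_dvd_prime_iff_eq pp (Nat.prime_of_mem_primeFactors hq.1)).mp hq') ▸ hpa)
    · exact Nat.Prime.not_coprime_iff_dvd.mpr ⟨p, pp, hpa, h⟩ hab
  · have pps : p ∈ ps := Finset.mem_filter.mpr ⟨Nat.mem_primeFactors.mpr ⟨pp, hpk, hk⟩, hpa⟩
    have : p ∣ ps.prod id * b := (Finset.dvd_prod_of_mem id pps).mul_right b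
    exact hpa ((Nat.dvd_add_right this).mp (by rwa [add_comm] at hp))

lemma aux_gcd_exists (a b k : ℕ) (hk : k ≠ 0) :
    ∃ s : ℕ, Nat.gcd (a + s * b) k = Nat.gcd (Nat.gcd a b) k := by
  rcases Nat.eq_zero_or_pos (Nat.gcd a b) with h | h
  · obtain ⟨ha, hb⟩ := Nat.gcd_eq_zero_iff.mp h
    exact ⟨0, by subst ha; subst hb; simp⟩
  · obtain ⟨g, a', b', hg, hco, ha, hb⟩ := Nat.exists_coprime' h
    obtain ⟨s, hs⟩ := aux_coprime_exists a' b' k hk hco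
    refine ⟨s, ?_⟩
    have h1 : a + s * b = (a' + s * b') * g := by rw [ha, hb]; ring
    have h2 : Nat.gcd a b = g := by
      rw [ha, hb, Nat.gcd_mul_right, Nat.Coprime.gcd_eq_one hco, one_mul]
    rw [h1, h2, Nat.Coprime.gcd_mul_left_cancel _ hs]

lemma aux_dvd (k : ℕ) (hk : k ≠ 0) (x y : ZMod k) (h : Nat.gcd x.val k ∣ y.val) :
    x ∣ y := by
  haveI : NeZero k := ⟨hk⟩
  obtain ⟨m, hm⟩ := h
  have key : ((Nat.gcd x.val k : ℕ) : ZMod k) = x * (Nat.gcdA x.val k : ZMod k) := by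
    have := Nat.gcd_eq_gcd_ab x.val k
    have : ((Nat.gcd x.val k : ℤ) : ZMod k) =
        ((x.val * Nat.gcdA x.val k + k * Nat.gcdB x.val k : ℤ) : ZMod k) := by rw [← this]
    push_cast at this
    rw [ZMod.natCast_val, ZMod.natCast_self] at this
    simpa using this
  refine ⟨(Nat.gcdA x.val k : ZMod k) * m, ?_⟩
  have : y = ((y.val : ℕ) : ZMod k) := (ZMod.natCast_rightInverse y).symm
  rw [this, hm]
  push_cast
  rw [key]; ring

theorem exists_ideal_span_singleton_eq (k : ℕ) (hk : 1 ≤ k) (a b : ZMod k) :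
    ∃ s : ZMod k, Ideal.span ({a + s * b} : Set (ZMod k)) =
      Ideal.span ({a, b} : Set (ZMod k)) := by
  have hk0 : k ≠ 0 := Nat.one_le_iff_ne_zero.mp hk
  haveI : NeZero k := ⟨hk0⟩
  obtain ⟨s, hs⟩ := aux_gcd_exists a.val b.val k hk0
  refine ⟨(s : ZMod k), le_antisymm ?_ ?_⟩
  · rw [Ideal.span_le, Set.singleton_subset_iff]
    exact Ideal.mem_span_pair.mpr ⟨1, (s : ZMod k), by ring⟩
  · have hx : a + (s : ZMod k) * b = ((a.val + s * b.val : ℕ) : ZMod k) := by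
      push_cast
      rw [ZMod.natCast_val, ZMod.natCast_val]
      simp [ZMod.cast_id]
    have hval : Nat.gcd (a + (s : ZMod k) * b).val k = Nat.gcd (a.val + s * b.val) k := by
      rw [hx, ZMod.val_natCast, ← Nat.gcd_rec, Nat.gcd_comm]
    have hdvd : ∀ y : ZMod k, Nat.gcd a.val b.val ∣ y.val →
        (a + (s : ZMod k) * b) ∣ y := by
      intro y hy
      apply aux_dvd k hk0
      rw [hval, hs]
      exact (Nat.gcd_dvd_left _ _).trans hy
    rw [Ideal.span_le, Set.insert_subset_iff, Set.singleton_subset_iff]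
    exact ⟨Ideal.mem_span_singleton.mpr (hdvd a (Nat.gcd_dvd_left _ _)),
      Ideal.mem_span_singleton.mpr (hdvd b (Nat.gcd_dvd_right _ _))⟩
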